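/- (Example 3) Let ψ' = (0.4/1.01, 0.4/1.01, 0.1/1.01, 0.1/1.01, 0.01/1.01), φ' = (0.5/1.01, 0.25/1.01, 0.2/1.01, 0.05/1.01, 0.01/1.01) and c = (0.7, 0.3). Then for every integer q ≥ 1, ψ'⊗c^{⊗q} is not majorized by φ'⊗c^{⊗q}; that is, c is not a multiple-copy catalyst for the transformation of ψ' to φ', so no number of copies of c suffices to catalyze this single-copy transformation. -/
import Mathlib


open Finset

/-- Sum of the `l` largest entries of `x` (maximum over subsets of size `l`),
counted with multiplicity: this is `S_l(x)` from the paper. -/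
noncomputable def topSum {ι : Type*} [Fintype ι] (x : ι → ℝ) (l : ℕ) : ℝ :=
  sSup {s : ℝ | ∃ A : Finset ι, A.card = l ∧ s = ∑ i ∈ A, x i}

/-- Sum of the `l` smallest entries of `x` (minimum over subsets of size `l`). -/
noncomputable def botSum {ι : Type*} [Fintype ι] (x : ι → ℝ) (l : ℕ) : ℝ :=
  sInf {s : ℝ | ∃ A : Finset ι, A.card = l ∧ s = ∑ i ∈ A, x i}

/-- `x` is majorized by `y` (written `x ≺ y`): for every `1 ≤ l ≤ N`,
the sum of the `l` largest entries of `x` is at most that of `y`. -/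
def Majorized {ι : Type*} [Fintype ι] (x y : ι → ℝ) : Prop :=
  ∀ l : ℕ, 1 ≤ l → l ≤ Fintype.card ι → topSum x l ≤ topSum y l

/-- Tensor product of two vectors: all pairwise products of entries. -/
def tensor {ι κ : Type*} (x : ι → ℝ) (z : κ → ℝ) : ι × κ → ℝ :=
  fun p => x p.1 * z p.2

/-- `p`-fold tensor power of a vector. -/
def tensorPow {ι : Type*} (x : ι → ℝ) (p : ℕ) : (Fin p → ι) → ℝ :=
  fun f => ∏ j, x (f j)

/-- Sum of the first `l` entries of a vector `x : Fin n → ℝ`. -/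
def prefixSum {n : ℕ} (x : Fin n → ℝ) (l : ℕ) : ℝ :=
  ∑ j ∈ Finset.univ.filter (fun j : Fin n => (j : ℕ) < l), x j

/-- Sum of the entries of `x : Fin n → ℝ` from index `l` (0-based) on. -/
def suffixSum {n : ℕ} (x : Fin n → ℝ) (l : ℕ) : ℝ :=
  ∑ j ∈ Finset.univ.filter (fun j : Fin n => l ≤ (j : ℕ)), x j

/-- `E_l(x) = 1 - S_{l-1}(x)`: the sum of the entries of the probability vector `x`
from the `l`-th largest to the smallest. -/
noncomputable def Evec {ι : Type*} [Fintype ι] (x : ι → ℝ) (l : ℕ) : ℝ :=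
  1 - topSum x (l - 1)

/-- Vidal conversion probability `P(x → y) = min_{1 ≤ l ≤ N} E_l(x)/E_l(y)`. -/
noncomputable def vidalP {ι : Type*} [Fintype ι] (x y : ι → ℝ) : ℝ :=
  sInf {r : ℝ | ∃ l : ℕ, 1 ≤ l ∧ l ≤ Fintype.card ι ∧ r = Evec x l / Evec y l}

/-- Nonincreasing rearrangement of the entries of `x`, as a list. -/
noncomputable def sortedDesc {ι : Type*} [Fintype ι] (x : ι → ℝ) : List ℝ :=
  ((Finset.univ.val.map x).sort (· ≤ ·)).reverse

lemma topSum_bdd {ι : Type*} [Fintype ι] (x : ι → ℝ) (l : ℕ) :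
    BddAbove {s : ℝ | ∃ A : Finset ι, A.card = l ∧ s = ∑ i ∈ A, x i} := by
  apply Set.Finite.bddAbove
  apply Set.Finite.subset (Set.finite_range (fun A : Finset ι => ∑ i ∈ A, x i))
  rintro s ⟨A, _, rfl⟩; exact ⟨A, rfl⟩

lemma le_topSum {ι : Type*} [Fintype ι] (x : ι → ℝ) (A : Finset ι) :
    (∑ i ∈ A, x i) ≤ topSum x A.card :=
  le_csSup (topSum_bdd x _) ⟨A, rfl, rfl⟩

lemma topSum_le {ι : Type*} [Fintype ι] (x : ι → ℝ) (l : ℕ) (hl : l ≤ Fintype.card ι)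
    (B : ℝ) (h : ∀ A : Finset ι, A.card = l → ∑ i ∈ A, x i ≤ B) : topSum x l ≤ B := by
  apply csSup_le
  · obtain ⟨A, _, hA⟩ := Finset.exists_subset_card_eq (le_of_le_of_eq hl (card_univ (α := ι)).symm)
    exact ⟨∑ i ∈ A, x i, A, hA, rfl⟩
  · rintro s ⟨A, hA, rfl⟩; exact h A hA

lemma cvec_nonneg (i : Fin 2) : (0:ℝ) ≤ (![0.7, 0.3] : Fin 2 → ℝ) i := by
  fin_cases i <;> norm_num

lemma cvec_le (i : Fin 2) : (![0.7, 0.3] : Fin 2 → ℝ) i ≤ 0.7 := by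
  fin_cases i <;> norm_num

lemma prodc_nonneg {q : ℕ} (s : Finset (Fin q)) (f : Fin q → Fin 2) :
    (0:ℝ) ≤ ∏ j ∈ s, (![0.7, 0.3] : Fin 2 → ℝ) (f j) :=
  Finset.prod_nonneg fun j _ => cvec_nonneg (f j)

lemma prodc_le {q : ℕ} (s : Finset (Fin q)) (f : Fin q → Fin 2) :
    ∏ j ∈ s, (![0.7, 0.3] : Fin 2 → ℝ) (f j) ≤ 0.7 ^ s.card := by
  calc ∏ j ∈ s, (![0.7, 0.3] : Fin 2 → ℝ) (f j) ≤ ∏ _j ∈ s, (0.7:ℝ) :=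
        Finset.prod_le_prod (fun j _ => cvec_nonneg (f j)) (fun j _ => cvec_le (f j))
    _ = 0.7 ^ s.card := by rw [Finset.prod_const]

lemma prodc_le' {q : ℕ} (f : Fin q → Fin 2) (hf : f ≠ fun _ => 0) :
    ∏ j, (![0.7, 0.3] : Fin 2 → ℝ) (f j) ≤ 0.3 * 0.7 ^ (q - 1) := by
  obtain ⟨j0, hj0⟩ : ∃ j0, f j0 ≠ 0 := by
    by_contra h; push_neg at h; exact hf (funext h)
  have h1 : f j0 = 1 := by
    have := (f j0).isLt
    have hv : (f j0).val ≠ 0 := fun h => hj0 (Fin.ext h)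
    exact Fin.ext (by omega)
  rw [← Finset.mul_prod_erase univ _ (mem_univ j0), h1]
  have hb : ∏ j ∈ univ.erase j0, (![0.7, 0.3] : Fin 2 → ℝ) (f j) ≤ 0.7 ^ (q - 1) := by
    have := prodc_le (univ.erase j0) f
    rwa [Finset.card_erase_of_mem (mem_univ j0), card_univ, Fintype.card_fin] at this
  have hnn := prodc_nonneg (univ.erase j0) f
  have : (![0.7, 0.3] : Fin 2 → ℝ) 1 = 0.3 := by norm_num
  rw [this]
  nlinarith

theorem stmt_19 :
    ∀ q : ℕ, 1 ≤ q →
      ¬ Majorized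
        (tensor (![0.4 / 1.01, 0.4 / 1.01, 0.1 / 1.01, 0.1 / 1.01, 0.01 / 1.01] : Fin 5 → ℝ)
          (tensorPow (![0.7, 0.3] : Fin 2 → ℝ) q))
        (tensor (![0.5 / 1.01, 0.25 / 1.01, 0.2 / 1.01, 0.05 / 1.01, 0.01 / 1.01] : Fin 5 → ℝ)
          (tensorPow (![0.7, 0.3] : Fin 2 → ℝ) q)) := by
  intro q hq hmaj
  set ψ : Fin 5 → ℝ := ![0.4 / 1.01, 0.4 / 1.01, 0.1 / 1.01, 0.1 / 1.01, 0.01 / 1.01] with hψ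
  set φ : Fin 5 → ℝ := ![0.5 / 1.01, 0.25 / 1.01, 0.2 / 1.01, 0.05 / 1.01, 0.01 / 1.01] with hφ
  set c : Fin 2 → ℝ := ![0.7, 0.3] with hc
  have hcard : (2:ℕ) ≤ Fintype.card (Fin 5 × (Fin q → Fin 2)) := by
    have h2 : 1 ≤ 2 ^ q := Nat.one_le_two_pow
    simp only [Fintype.card_prod, Fintype.card_fun, Fintype.card_fin]
    calc 2 ≤ 5 * 1 := by norm_num
      _ ≤ 5 * 2 ^ q := Nat.mul_le_mul_left 5 h2
  -- the two top entries of the ψ side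
  have f0 : Fin q → Fin 2 := fun _ => 0
  set p0 : Fin 5 × (Fin q → Fin 2) := (0, fun _ => 0) with hp0
  set p1 : Fin 5 × (Fin q → Fin 2) := (1, fun _ => 0) with hp1
  have hne : p0 ≠ p1 := by
    simp [hp0, hp1, Prod.ext_iff]
  have hprod0 : (∏ j : Fin q, c 0) = 0.7 ^ q := by
    rw [Finset.prod_const, card_univ, Fintype.card_fin]
    norm_num [hc]
  -- lower bound for topSum ψ 2
  have hlow : (0.8 / 1.01) * 0.7 ^ q ≤ topSum (tensor ψ (tensorPow c q)) 2 := by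
    have hA := le_topSum (tensor ψ (tensorPow c q)) {p0, p1}
    rw [Finset.card_pair hne, Finset.sum_pair hne] at hA
    refine le_trans (le_of_eq ?_) hA
    simp only [tensor, tensorPow, hp0, hp1, hψ]
    rw [hprod0]
    norm_num
    ring
  -- entrywise bounds on φ
  have hφ_le : ∀ i : Fin 5, φ i ≤ 0.5 / 1.01 := by
    intro i; rw [hφ]; fin_cases i <;> norm_num
  have hφ_nonneg : ∀ i : Fin 5, (0:ℝ) ≤ φ i := by
    intro i; rw [hφ]; fin_cases i <;> norm_num
  have hφ_snd : ∀ i : Fin 5, i ≠ 0 → φ i ≤ 0.25 / 1.01 := by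
    intro i hi
    rw [hφ]
    fin_cases i
    · exact absurd rfl hi
    all_goals norm_num
  -- upper bound for topSum φ 2
  have hentry_max : ∀ p : Fin 5 × (Fin q → Fin 2),
      tensor φ (tensorPow c q) p ≤ (0.5 / 1.01) * 0.7 ^ q := by
    intro p
    have h1 : φ p.1 ≤ 0.5 / 1.01 := hφ_le p.1
    have h2 : tensorPow c q p.2 ≤ 0.7 ^ q := by
      have := prodc_le (univ : Finset (Fin q)) p.2
      rwa [card_univ, Fintype.card_fin] at this
    have h3 : (0:ℝ) ≤ tensorPow c q p.2 := prodc_nonneg univ p.2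
    have h4 : (0:ℝ) ≤ φ p.1 := hφ_nonneg p.1
    calc tensor φ (tensorPow c q) p = φ p.1 * tensorPow c q p.2 := rfl
      _ ≤ (0.5 / 1.01) * 0.7 ^ q := by nlinarith
  have hentry_snd : ∀ p : Fin 5 × (Fin q → Fin 2), p ≠ p0 →
      tensor φ (tensorPow c q) p ≤ (0.25 / 1.01) * 0.7 ^ q := by
    intro p hp
    have h3 : (0:ℝ) ≤ tensorPow c q p.2 := prodc_nonneg univ p.2
    by_cases h1 : p.1 = 0
    · have h2 : p.2 ≠ fun _ => 0 := by
        intro h; exact hp (Prod.ext h1 h)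
      have hb : tensorPow c q p.2 ≤ 0.3 * 0.7 ^ (q - 1) := prodc_le' p.2 h2
      have h4 : φ p.1 = 0.5 / 1.01 := by rw [hφ, h1]; norm_num
      have hpos : (0:ℝ) ≤ 0.7 ^ (q - 1) := by positivity
      have hqq : (0.7:ℝ) ^ q = 0.7 ^ (q - 1) * 0.7 := by
        rw [← pow_succ]
        congr 1
        omega
      calc tensor φ (tensorPow c q) p = φ p.1 * tensorPow c q p.2 := rfl
        _ ≤ (0.5 / 1.01) * (0.3 * 0.7 ^ (q - 1)) := by rw [h4]; nlinarith
        _ ≤ (0.25 / 1.01) * 0.7 ^ q := by rw [hqq]; nlinarith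
    · have h4 : φ p.1 ≤ 0.25 / 1.01 := hφ_snd p.1 h1
      have h2 : tensorPow c q p.2 ≤ 0.7 ^ q := by
        have := prodc_le (univ : Finset (Fin q)) p.2
        rwa [card_univ, Fintype.card_fin] at this
      have h5 : (0:ℝ) ≤ φ p.1 := hφ_nonneg p.1
      calc tensor φ (tensorPow c q) p = φ p.1 * tensorPow c q p.2 := rfl
        _ ≤ (0.25 / 1.01) * 0.7 ^ q := by nlinarith
  have hup : topSum (tensor φ (tensorPow c q)) 2 ≤ (0.75 / 1.01) * 0.7 ^ q := by
    apply topSum_le _ _ hcard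
    intro A hA
    obtain ⟨a, b, hab, rfl⟩ := Finset.card_eq_two.mp hA
    rw [Finset.sum_pair hab]
    by_cases ha : a = p0
    · have hb' : b ≠ p0 := fun h => hab (h ▸ ha ▸ rfl)
      have := hentry_max a
      have := hentry_snd b hb'
      nlinarith [pow_pos (by norm_num : (0:ℝ) < 0.7) q]
    · have := hentry_snd a ha
      have := hentry_max b
      nlinarith [pow_pos (by norm_num : (0:ℝ) < 0.7) q]
  have hm := hmaj 2 (by norm_num) hcard
  have hpow : (0:ℝ) < 0.7 ^ q := pow_pos (by norm_num) q
  nlinarith
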